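/- Let Z be a real skew-symmetric n×n matrix such that I − ZᵀZ is positive definite. Then (Z + √(I − ZᵀZ))ᵀ (Z + √(I − ZᵀZ)) = I, i.e., the matrix Z + √(I − ZᵀZ) is orthogonal. -/

import Mathlib

open Matrix Polynomial

section

open scoped ComplexOrder

/-- The positive semidefinite square root of a positive semidefinite matrix (the definition of
`Matrix.PosSemidef.sqrt` in the older Mathlib, which has since been removed). -/
noncomputable def Matrix.PosSemidef.sqrt {n 𝕜 : Type*} [Fintype n] [RCLike 𝕜] [DecidableEq n]
    {A : Matrix n n 𝕜} (hA : A.PosSemidef) : Matrix n n 𝕜 :=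
  hA.1.eigenvectorUnitary.1 * diagonal ((↑) ∘ (√·) ∘ hA.1.eigenvalues) *
  (star hA.1.eigenvectorUnitary : Matrix n n 𝕜)

end

/-- Conjugation by a unitary matrix as an algebra homomorphism. -/
noncomputable def conjUnitaryAlgHom {m : Type*} [Fintype m] [DecidableEq m]
    (U : Matrix.unitaryGroup m ℝ) :
    Matrix m m ℝ →ₐ[ℝ] Matrix m m ℝ where
  toFun B := (U : Matrix m m ℝ) * B * star (U : Matrix m m ℝ)
  map_one' := by
    simp [Matrix.mem_unitaryGroup_iff.mp U.2]
  map_mul' B C := by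
    have h : star (U : Matrix m m ℝ) * (U : Matrix m m ℝ) = 1 :=
      Matrix.mem_unitaryGroup_iff'.mp U.2
    simp only [Matrix.mul_assoc]
    rw [← Matrix.mul_assoc (star (U : Matrix m m ℝ)), h, Matrix.one_mul]
  map_zero' := by simp
  map_add' B C := by
    simp [Matrix.mul_add, Matrix.add_mul]
  commutes' r := by
    simp only [Algebra.algebraMap_eq_smul_one]
    rw [Matrix.mul_smul, Matrix.mul_one, Matrix.smul_mul,
      Matrix.mem_unitaryGroup_iff.mp U.2]

lemma aeval_apply_diagonal {m : Type*} [Fintype m] [DecidableEq m]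
    (d : m → ℝ) (p : ℝ[X]) :
    aeval (Matrix.diagonal d) p = Matrix.diagonal (fun i => p.eval (d i)) := by
  have h := aeval_algHom_apply (Matrix.diagonalAlgHom (R := ℝ) (n := m) (α := ℝ)) d p
  simp only [Matrix.diagonalAlgHom_apply] at h
  rw [h]
  have hfun : (aeval d p : m → ℝ) = fun i => p.eval (d i) := by
    funext i
    have h2 := aeval_algHom_apply (Pi.evalAlgHom ℝ (fun _ : m => ℝ) i) d p
    simp only [Pi.evalAlgHom_apply] at h2
    rw [← h2, ← coe_aeval_eq_eval]
  rw [hfun]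

lemma commute_aeval {m : Type*} [Fintype m] [DecidableEq m]
    {B C : Matrix m m ℝ} (h : Commute B C) (p : ℝ[X]) :
    Commute B (aeval C p) := by
  induction p using Polynomial.induction_on' with
  | add q r hq hr => rw [map_add]; exact hq.add_right hr
  | monomial k a =>
      rw [aeval_monomial]
      exact ((Algebra.commute_algebraMap_right a B)).mul_right (h.pow_right k)

/-- A skew matrix commutes with the psd square root of `1 - Zᵀ Z`. -/
lemma commute_sqrt {n : ℕ} (Z : Matrix (Fin n) (Fin n) ℝ)
    (hpsd : (1 - Zᵀ * Z).PosSemidef)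
    (hc : Commute Z (1 - Zᵀ * Z)) :
    Commute Z hpsd.sqrt := by
  classical
  set A := 1 - Zᵀ * Z with hAdef
  set herm := hpsd.1
  -- interpolation polynomial hitting √ at each eigenvalue
  set s : Finset ℝ := Finset.univ.image herm.eigenvalues with hs
  set p : ℝ[X] := Lagrange.interpolate s id Real.sqrt with hp
  have hinj : Set.InjOn (id : ℝ → ℝ) s := fun x _ y _ h => h
  have heval : ∀ i, p.eval (herm.eigenvalues i) = Real.sqrt (herm.eigenvalues i) := by
    intro i
    have hi : herm.eigenvalues i ∈ s := Finset.mem_image_of_mem _ (Finset.mem_univ i)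
    simpa [hp] using Lagrange.eval_interpolate_at_node Real.sqrt hinj hi
  have key : aeval A p = hpsd.sqrt := by
    conv_lhs => rw [herm.spectral_theorem, Unitary.conjStarAlgAut_apply]
    have h1 : (herm.eigenvectorUnitary : Matrix (Fin n) (Fin n) ℝ) *
        Matrix.diagonal (RCLike.ofReal ∘ herm.eigenvalues) *
        star (herm.eigenvectorUnitary : Matrix (Fin n) (Fin n) ℝ)
        = conjUnitaryAlgHom herm.eigenvectorUnitary
            (Matrix.diagonal (RCLike.ofReal ∘ herm.eigenvalues)) := rfl
    rw [h1, aeval_algHom_apply, aeval_apply_diagonal]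
    show (herm.eigenvectorUnitary : Matrix (Fin n) (Fin n) ℝ) * _ *
        star (herm.eigenvectorUnitary : Matrix (Fin n) (Fin n) ℝ) = _
    rw [Matrix.PosSemidef.sqrt]
    have hfun : (fun i => p.eval ((RCLike.ofReal ∘ herm.eigenvalues : Fin n → ℝ) i))
        = (RCLike.ofReal ∘ Real.sqrt ∘ herm.eigenvalues : Fin n → ℝ) := by
      funext i
      simpa using heval i
    rw [hfun]
  rw [← key]
  exact commute_aeval hc p

/-- Let `Z` be a real skew-symmetric `n × n` matrix such that
`I - Zᵀ Z` is positive definite.  Then `(Z + √(I - Zᵀ Z))ᵀ (Z + √(I - Zᵀ Z)) = I`,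
i.e. the matrix `Z + √(I - Zᵀ Z)` is orthogonal (here the square root is the unique
positive (semi)definite square root). -/
theorem stmt1 {n : ℕ} (Z : Matrix (Fin n) (Fin n) ℝ)
    (hZ : Zᵀ = -Z) (hpd : (1 - Zᵀ * Z).PosDef) :
    (Z + hpd.posSemidef.sqrt)ᵀ * (Z + hpd.posSemidef.sqrt) = 1 := by
  set S := hpd.posSemidef.sqrt with hS
  have hcA : Commute Z (1 - Zᵀ * Z) := by
    rw [hZ, neg_mul, sub_neg_eq_add]
    exact (Commute.one_right Z).add_right ((Commute.refl Z).mul_right (Commute.refl Z))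
  have hc : Z * S = S * Z := commute_sqrt Z hpd.posSemidef hcA
  have hST : Sᵀ = S := by
    simp only [hS, Matrix.PosSemidef.sqrt, Matrix.transpose_mul, Matrix.star_eq_conjTranspose,
      Matrix.conjTranspose_eq_transpose_of_trivial, Matrix.transpose_transpose,
      Matrix.diagonal_transpose, Matrix.mul_assoc]
  have hSS : S * S = 1 - Zᵀ * Z := by
    have herm := hpd.posSemidef.1
    have hU : star (herm.eigenvectorUnitary : Matrix (Fin n) (Fin n) ℝ) *
        (herm.eigenvectorUnitary : Matrix (Fin n) (Fin n) ℝ) = 1 :=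
      Matrix.mem_unitaryGroup_iff'.mp herm.eigenvectorUnitary.2
    rw [hS, Matrix.PosSemidef.sqrt]
    conv_rhs => rw [herm.spectral_theorem, Unitary.conjStarAlgAut_apply]
    simp only [Matrix.mul_assoc]
    rw [← Matrix.mul_assoc (star _) (herm.eigenvectorUnitary : Matrix (Fin n) (Fin n) ℝ), hU,
      Matrix.one_mul, ← Matrix.mul_assoc (diagonal _), Matrix.diagonal_mul_diagonal]
    congr 3
    funext i
    simp [Real.mul_self_sqrt (hpd.posSemidef.eigenvalues_nonneg i)]
  rw [Matrix.transpose_add, hZ, hST]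
  rw [add_mul, mul_add, mul_add]
  rw [hSS, hZ]
  rw [neg_mul Z S, hc, neg_mul Z Z]
  abel
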